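/- Let A be a complex unital Banach algebra and D, X ∈ A with ‖D‖ ≤ 1/2. Writing E := [D,X] - 1 with ‖E‖ ≤ ε < 1, one has the inequality 1 ≤ ε·exp(‖X‖). -/

import Mathlib

open Finset Filter

lemma popa_comm_pow_est {A : Type*} [NormedRing A] (D X : A) (ε : ℝ)
    (hE : ‖D * X - X * D - 1‖ ≤ ε) (n : ℕ) :
    ‖D * X ^ (n+1) - X ^ (n+1) * D - (n+1) • X ^ n‖ ≤ (n+1) * ε * ‖X‖ ^ n := by
  induction n with
  | zero => simpa using hE
  | succ n ih =>
    have hε0 : 0 ≤ ε := le_trans (norm_nonneg _) hE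
    have key : D * X ^ (n+2) - X ^ (n+2) * D - (n+2) • X ^ (n+1)
        = (D * X ^ (n+1) - X ^ (n+1) * D - (n+1) • X ^ n) * X
          + X ^ (n+1) * (D * X - X * D - 1) := by
      have h1 : ((n+1) • X ^ n) * X = (n+1) • X ^ (n+1) := by
        rw [smul_mul_assoc, ← pow_succ]
      rw [sub_mul, sub_mul, h1]
      rw [show (n+2) • X ^ (n+1) = (n+1) • X ^ (n+1) + X ^ (n+1) by
        rw [succ_nsmul]]
      rw [pow_succ, pow_succ]
      noncomm_ring
    calc ‖D * X ^ (n+2) - X ^ (n+2) * D - (n+2) • X ^ (n+1)‖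
        ≤ ‖(D * X ^ (n+1) - X ^ (n+1) * D - (n+1) • X ^ n) * X‖
          + ‖X ^ (n+1) * (D * X - X * D - 1)‖ := by rw [key]; exact norm_add_le _ _
      _ ≤ ‖D * X ^ (n+1) - X ^ (n+1) * D - (n+1) • X ^ n‖ * ‖X‖
          + ‖X ^ (n+1)‖ * ‖D * X - X * D - 1‖ := by
            gcongr <;> [exact norm_mul_le _ _; exact norm_mul_le _ _]
      _ ≤ ((n+1) * ε * ‖X‖ ^ n) * ‖X‖ + ‖X‖ ^ (n+1) * ε := by
            gcongr
            exact norm_pow_le' X (Nat.succ_pos n)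
      _ = ((n:ℝ)+1+1) * ε * ‖X‖ ^ (n+1) := by ring
      _ = (((n+1:ℕ):ℝ)+1) * ε * ‖X‖ ^ (n+1) := by push_cast; ring
  
theorem popa_key_inequality {A : Type*} [NormedRing A] [NormedAlgebra ℂ A] [CompleteSpace A]
    [NormOneClass A] (D X : A) (hD : ‖D‖ ≤ 1 / 2) (ε : ℝ) (hε : ε < 1)
    (hE : ‖D * X - X * D - 1‖ ≤ ε) :
    1 ≤ ε * Real.exp ‖X‖ := by
  have hε0 : 0 ≤ ε := le_trans (norm_nonneg _) hE
  -- step inequality: (n+1) * ‖X^n‖ ≤ ‖X^(n+1)‖ + (n+1) * ε * ‖X‖^n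
  have step : ∀ n : ℕ, ((n:ℝ)+1) * ‖X ^ n‖ ≤ ‖X ^ (n+1)‖ + ((n:ℝ)+1) * ε * ‖X‖ ^ n := by
    intro n
    have h1 : ‖((n+1) : ℕ) • X ^ n‖ = ((n:ℝ)+1) * ‖X ^ n‖ := by
      rw [← Nat.cast_smul_eq_nsmul ℝ, norm_smul, Real.norm_natCast]
      push_cast
      ring
    have h2 := popa_comm_pow_est D X ε hE n
    have h3 : ‖D * X ^ (n+1) - X ^ (n+1) * D‖ ≤ ‖X ^ (n+1)‖ := by
      calc ‖D * X ^ (n+1) - X ^ (n+1) * D‖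
          ≤ ‖D * X ^ (n+1)‖ + ‖X ^ (n+1) * D‖ := norm_sub_le _ _
        _ ≤ ‖D‖ * ‖X ^ (n+1)‖ + ‖X ^ (n+1)‖ * ‖D‖ := by
            gcongr <;> [exact norm_mul_le _ _; exact norm_mul_le _ _]
        _ ≤ (1/2) * ‖X ^ (n+1)‖ + ‖X ^ (n+1)‖ * (1/2) := by gcongr
        _ = ‖X ^ (n+1)‖ := by ring
    have h5 : ‖((n+1) : ℕ) • X ^ n‖ ≤ ‖D * X ^ (n+1) - X ^ (n+1) * D‖
        + ‖D * X ^ (n+1) - X ^ (n+1) * D - ((n+1) : ℕ) • X ^ n‖ := by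
      have := norm_sub_le (D * X ^ (n+1) - X ^ (n+1) * D)
        (D * X ^ (n+1) - X ^ (n+1) * D - ((n+1) : ℕ) • X ^ n)
      simpa using this
    have h4 : ‖((n+1) : ℕ) • X ^ n‖ ≤ ‖D * X ^ (n+1) - X ^ (n+1) * D‖ + ((n:ℝ)+1) * ε * ‖X‖ ^ n := by
      push_cast at h2
      linarith
    rw [h1] at h4
    linarith
  set a : ℕ → ℝ := fun n => ‖X ^ n‖ / n.factorial with ha
  have hstep : ∀ n : ℕ, a n - a (n+1) ≤ ε * (‖X‖ ^ n / n.factorial) := by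
    intro n
    have hfac : (0:ℝ) < n.factorial := by positivity
    have hf : (0:ℝ) < (n+1).factorial := by positivity
    have h := step n
    have hfac1 : ((n+1).factorial : ℝ) = ((n:ℝ)+1) * n.factorial := by
      push_cast [Nat.factorial_succ]; ring
    have e : a n - a (n+1) = (((n:ℝ)+1) * ‖X ^ n‖ - ‖X ^ (n+1)‖) / (n+1).factorial := by
      simp only [ha]
      rw [hfac1]
      field_simp
    have e2 : ε * (‖X‖ ^ n / n.factorial) = (((n:ℝ)+1) * ε * ‖X‖ ^ n) / (n+1).factorial := by
      rw [hfac1]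
      field_simp
    rw [e, e2]
    gcongr
    linarith
  have htel : ∀ N : ℕ, a 0 - a N ≤ ε * Real.exp ‖X‖ := by
    intro N
    have := Finset.sum_range_sub' a N
    calc a 0 - a N = ∑ i ∈ Finset.range N, (a i - a (i+1)) := (Finset.sum_range_sub' a N).symm
      _ ≤ ∑ i ∈ Finset.range N, ε * (‖X‖ ^ i / i.factorial) :=
          Finset.sum_le_sum fun i _ => hstep i
      _ = ε * ∑ i ∈ Finset.range N, ‖X‖ ^ i / i.factorial := by rw [Finset.mul_sum]
      _ ≤ ε * Real.exp ‖X‖ := by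
          gcongr
          exact Real.sum_le_exp_of_nonneg (norm_nonneg X) N
  have ha0 : a 0 = 1 := by simp [ha]
  have hlim : Tendsto a atTop (nhds 0) := by
    have hub : ∀ n, a n ≤ ‖X‖ ^ n / n.factorial := fun n => by
      simp only [ha]
      gcongr
      exact norm_pow_le X n
    have hlb : ∀ n, 0 ≤ a n := fun n => by positivity
    exact tendsto_of_tendsto_of_tendsto_of_le_of_le tendsto_const_nhds
      (FloorSemiring.tendsto_pow_div_factorial_atTop ‖X‖) hlb hub
  have : Tendsto (fun N => ε * Real.exp ‖X‖ + a N) atTop (nhds (ε * Real.exp ‖X‖)) := by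
    simpa using (tendsto_const_nhds.add hlim)
  refine ge_of_tendsto' this fun N => ?_
  have := htel N
  linarith [ha0 ▸ this]
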